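/- Let A be an algebra over a field k, and consider the full subcategory Fin of A-modules in which every element generates a finite-dimensional submodule (locally finite modules). Let (E_i)_{i∈I} be a family of A-modules in Fin, each of which is injective relative to Fin (i.e. for every monomorphism ι : X → Y in Fin and homomorphism X → E_i there is an extension Y → E_i). Then the direct sum ⊕_{i∈I} E_i is injective relative to Fin. -/

import Mathlib

open scoped DirectSum

/-- A module is locally finite if every element generates a finite-dimensional
(over the base field) submodule. -/
def LocFinMod (k A : Type) [Field k] [Ring A] [Algebra k A]
    (X : Type) [AddCommGroup X] [Module k X] [Module A X] [IsScalarTower k A X] : Prop :=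
  ∀ v : X, ∃ S : Submodule A X, v ∈ S ∧ FiniteDimensional k (S.restrictScalars k)

/-- `E` is injective relative to the category `Fin` of locally finite modules. -/
def RelInjectiveFin (k A : Type) [Field k] [Ring A] [Algebra k A]
    (E : Type) [AddCommGroup E] [Module A E] : Prop :=
  ∀ (X Y : Type) [AddCommGroup X] [Module k X] [Module A X] [IsScalarTower k A X]
    [AddCommGroup Y] [Module k Y] [Module A Y] [IsScalarTower k A Y],
    LocFinMod k A X → LocFinMod k A Y →
    ∀ ι : X →ₗ[A] Y, Function.Injective ι →
    ∀ φ : X →ₗ[A] E, ∃ ψ : Y →ₗ[A] E, ψ.comp ι = φ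

section aux
variable {k A : Type} [Field k] [Ring A] [Algebra k A]

/-- a submodule of a locally finite module is locally finite -/
lemma locFinMod_submodule {Y : Type} [AddCommGroup Y] [Module k Y] [Module A Y]
    [IsScalarTower k A Y]
    (hY : ∀ v : Y, ∃ S : Submodule A Y, v ∈ S ∧ FiniteDimensional k (S.restrictScalars k))
    (N : Submodule A Y) :
    ∀ v : N, ∃ S : Submodule A N, v ∈ S ∧ FiniteDimensional k (S.restrictScalars k) := by
  intro v
  obtain ⟨S, hvS, hfd⟩ := hY v.1
  refine ⟨S.comap N.subtype, hvS, ?_⟩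
  haveI := hfd
  let g : ((S.comap N.subtype).restrictScalars k) →ₗ[k] (S.restrictScalars k) :=
    { toFun := fun x => ⟨x.1.1, x.2⟩
      map_add' := fun _ _ => rfl
      map_smul' := fun _ _ => rfl }
  have hg : Function.Injective g := by
    intro a b hab
    have h2 : (g a).1 = (g b).1 := congrArg Subtype.val hab
    exact Subtype.ext (Subtype.ext h2)
  exact FiniteDimensional.of_injective g hg

variable {I : Type} (E : I → Type) [∀ i, AddCommGroup (E i)] [∀ i, Module k (E i)]
    [∀ i, Module A (E i)] [∀ i, IsScalarTower k A (E i)]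

/-- image of a finite-dimensional module in a direct sum has finite support -/
lemma exists_finset_support {V : Type} [AddCommGroup V] [Module k V] [Module A V]
    [IsScalarTower k A V] [FiniteDimensional k V] (ψ : V →ₗ[A] ⨁ i, E i) :
    ∃ F : Finset I, ∀ (v : V) (i : I), i ∉ F → ψ v i = 0 := by
  classical
  obtain ⟨s, hs⟩ := Module.Finite.fg_top (R := k) (M := V)
  refine ⟨s.biUnion fun v => (ψ v).support, ?_⟩
  set F := s.biUnion fun v => (ψ v).support with hF
  let P : Submodule k V :=
    { carrier := {v | ∀ i, i ∉ F → ψ v i = 0}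
      zero_mem' := fun i _ => by rw [map_zero]; rfl
      add_mem' := by
        intro a b ha hb i hi
        rw [map_add, DirectSum.add_apply, ha i hi, hb i hi, add_zero]
      smul_mem' := by
        intro c v hv i hi
        have h1 : ψ (c • v) = c • ψ v := by
          rw [← algebraMap_smul A c v, map_smul, algebraMap_smul]
        rw [h1, DFinsupp.smul_apply, hv i hi, smul_zero] }
  have hsP : (s : Set V) ⊆ P := by
    intro v hv i hi
    have : i ∉ (ψ v).support := fun h => hi (Finset.mem_biUnion.2 ⟨v, hv, h⟩)
    exact DFinsupp.notMem_support_iff.1 this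
  have : (⊤ : Submodule k V) ≤ P := hs ▸ Submodule.span_le.2 hsP
  exact fun v i hi => this Submodule.mem_top i hi

lemma sum_of_eq [DecidableEq I] {F : Finset I} {z : ⨁ i, E i} (hz : ∀ i ∉ F, z i = 0) :
    ∑ i ∈ F, DirectSum.of E i (z i) = z := by
  classical
  refine Eq.trans (Finset.sum_subset ?_ ?_).symm (DirectSum.sum_support_of z)
  · intro i hi
    by_contra h
    exact DFinsupp.mem_support_iff.1 hi (hz i h)
  · intro i _ hi
    rw [DFinsupp.notMem_support_iff.1 hi, map_zero]

end aux

/-- A direct sum of modules each injective relative to the category of locally finite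
modules is again injective relative to that category. -/
theorem stmt6 {k A : Type} [Field k] [Ring A] [Algebra k A]
    {I : Type} (E : I → Type) [∀ i, AddCommGroup (E i)] [∀ i, Module k (E i)]
    [∀ i, Module A (E i)] [∀ i, IsScalarTower k A (E i)]
    (hlf : ∀ i, LocFinMod k A (E i))
    (hinj : ∀ i, RelInjectiveFin k A (E i)) :
    RelInjectiveFin k A (⨁ i, E i) := by
  intro X Y _ _ _ _ _ _ _ _ hX hY ι hι φ
  classical
  haveI : Fact (Function.Injective ι) := ⟨hι⟩
  set D := Module.Baer.extensionOfMax ι φ with hDdef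
  have hD : D.domain = ⊤ := by
    by_contra hne
    obtain ⟨y, hy⟩ : ∃ y : Y, y ∉ D.domain := by
      by_contra h
      push_neg at h
      exact hne (Submodule.eq_top_iff'.2 h)
    obtain ⟨N, hyN, hNfd⟩ := hY y
    set W : Submodule A Y := D.domain ⊓ N with hWdef
    haveI : FiniteDimensional k (N.restrictScalars k) := hNfd
    have hle : W.restrictScalars k ≤ N.restrictScalars k := fun x hx => hx.2
    haveI : FiniteDimensional k (W.restrictScalars k) :=
      FiniteDimensional.of_injective (Submodule.inclusion hle) (Submodule.inclusion_injective hle)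
    haveI : FiniteDimensional k W :=
      Module.Finite.equiv ((Submodule.restrictScalarsEquiv k A Y W).restrictScalars k)
    let f0 : W →ₗ[A] ⨁ i, E i :=
      D.toLinearPMap.toFun.comp (Submodule.inclusion (inf_le_left : W ≤ D.domain))
    obtain ⟨F, hF⟩ := exists_finset_support (k := k) E f0
    have hWlf := locFinMod_submodule hY W
    have hNlf := locFinMod_submodule hY N
    let j : W →ₗ[A] N := Submodule.inclusion (inf_le_right : W ≤ N)
    have hj : Function.Injective j := Submodule.inclusion_injective _
    choose χ hχ using fun i : I =>
      hinj i W N hWlf hNlf j hj ((DirectSum.component A I E i).comp f0)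
    let χs : N →ₗ[A] ⨁ i, E i := ∑ i ∈ F, (DirectSum.lof A I E i).comp (χ i)
    have hext : ∀ w : W, χs (j w) = f0 w := by
      intro w
      have h1 : χs (j w) = ∑ i ∈ F, DirectSum.lof A I E i (χ i (j w)) := by
        simp [χs, LinearMap.sum_apply]
      rw [h1]
      have h3 : ∀ i ∈ F, DirectSum.lof A I E i (χ i (j w)) = DirectSum.of E i (f0 w i) := by
        intro i _
        have h2 : χ i (j w) = DirectSum.component A I E i (f0 w) := by
          have := congrFun (congrArg DFunLike.coe (hχ i)) w
          simpa using this
        rw [h2, DirectSum.lof_eq_of, ← DirectSum.apply_eq_component]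
      rw [Finset.sum_congr rfl h3, sum_of_eq E (fun i hi => hF w i hi)]
    let g : LinearPMap (RingHom.id A) Y (⨁ i, E i) := ⟨N, χs⟩
    have hcompat : ∀ (x : D.toLinearPMap.domain) (z : g.domain),
        (x : Y) = z → D.toLinearPMap x = g z := by
      intro x z hxz
      have hw : (x : Y) ∈ W := ⟨x.2, by rw [hxz]; exact z.2⟩
      have h2 := hext ⟨(x : Y), hw⟩
      have hz : j ⟨(x : Y), hw⟩ = z := Subtype.ext hxz
      have hx0 : f0 ⟨(x : Y), hw⟩ = D.toLinearPMap x := by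
        show D.toLinearPMap.toFun (Submodule.inclusion _ ⟨(x : Y), hw⟩) = D.toLinearPMap.toFun x
        congr 1
      rw [hz, hx0] at h2
      exact h2.symm
    let Dp : Module.Baer.ExtensionOf ι φ :=
      { D.toLinearPMap.sup g hcompat with
        le := le_trans D.le le_sup_left
        is_extension := fun m =>
          (D.is_extension m).trans ((D.toLinearPMap.left_le_sup g hcompat).2 rfl) }
    have hmax : Dp = D :=
      Module.Baer.extensionOfMax_is_max ι φ Dp (D.toLinearPMap.left_le_sup g hcompat)
    have hyD : y ∈ Dp.domain := Submodule.mem_sup_right hyN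
    rw [hmax] at hyD
    exact hy hyD
  exact ⟨{ toFun := fun y => D.toLinearPMap ⟨y, hD.symm ▸ ⟨⟩⟩
           map_add' := fun a b => by rw [← LinearPMap.map_add]; congr
           map_smul' := fun r x => by rw [← LinearPMap.map_smul]; dsimp },
    LinearMap.ext fun x => (D.is_extension x).symm⟩
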